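/- (Conditional single-batch unbiasedness) Let Z be a nonempty finite set, T a nonempty subset of Z, s : T → ℝ a score function, and m ≥ 1. For x ∈ Z^m, let N(x) be the number of indices i with x(i) ∈ T, and define A(x) = (1/N(x)) · Σ_{i : x(i) ∈ T} s(x(i)) when N(x) > 0. If x is drawn uniformly at random from Z^m, then the conditional expectation of A(x) given the event {N(x) ≥ 1} equals s_T = (1/|T|) Σ_{t ∈ T} s(t). -/

import Mathlib

open Finset

/-- The number of coordinates of the tuple `x : Z^m` that lie in `T`. -/
def hitCount {Z : Type*} [DecidableEq Z] (T : Finset Z) {m : ℕ} (x : Fin m → Z) : ℕ :=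
  (Finset.univ.filter fun i => x i ∈ T).card

/-- `A(x)`: the average of the score `s` over the coordinates of `x` lying in `T`
if at least one coordinate lies in `T`, and `0` otherwise. -/
noncomputable def batchAvg {Z : Type*} [DecidableEq Z] (T : Finset Z) (s : T → ℝ)
    {m : ℕ} (x : Fin m → Z) : ℝ :=
  if h : 0 < hitCount T x then
    (∑ i ∈ (Finset.univ.filter fun i => x i ∈ T).attach,
        s ⟨x i.1, (Finset.mem_filter.mp i.2).2⟩) / (hitCount T x : ℝ)
  else 0

section Aux
variable {Z : Type*} [DecidableEq Z]

/-- The number of coordinates of `x` equal to `t`. -/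
def cntAux (t : Z) {m : ℕ} (x : Fin m → Z) : ℕ :=
  (Finset.univ.filter fun i => x i = t).card

lemma hitCount_eq_sum_cnt (T : Finset Z) {m : ℕ} (x : Fin m → Z) :
    hitCount T x = ∑ t ∈ T, cntAux t x := by
  unfold hitCount cntAux
  rw [Finset.card_eq_sum_card_fiberwise (f := x) (s := Finset.univ.filter fun i => x i ∈ T) (t := T)
    (fun i hi => (Finset.mem_filter.mp hi).2)]
  refine Finset.sum_congr rfl fun t ht => ?_
  congr 1
  ext i
  simp only [Finset.mem_filter, Finset.mem_univ, true_and]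
  exact ⟨fun h => h.2, fun h => ⟨h ▸ ht, h⟩⟩

noncomputable def extFun (T : Finset Z) (s : T → ℝ) (z : Z) : ℝ :=
  if h : z ∈ T then s ⟨z, h⟩ else 0

lemma batchAvg_eq (T : Finset Z) (s : T → ℝ) {m : ℕ} (x : Fin m → Z)
    (hx : 0 < hitCount T x) :
    batchAvg T s x = ∑ t ∈ T.attach, s t * ((cntAux t.1 x : ℝ) / (hitCount T x : ℝ)) := by
  rw [batchAvg, dif_pos hx]
  have h1 : (∑ i ∈ (Finset.univ.filter fun i => x i ∈ T).attach,
        s ⟨x i.1, (Finset.mem_filter.mp i.2).2⟩)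
      = ∑ i ∈ (Finset.univ.filter fun i => x i ∈ T), extFun T s (x i) := by
    rw [← Finset.sum_attach (Finset.univ.filter fun i => x i ∈ T) (fun i => extFun T s (x i))]
    refine Finset.sum_congr rfl fun i _ => ?_
    rw [extFun, dif_pos (Finset.mem_filter.mp i.2).2]
  have h2 : ∑ i ∈ (Finset.univ.filter fun i => x i ∈ T), extFun T s (x i)
      = ∑ t ∈ T, extFun T s t * (cntAux t x : ℝ) := by
    rw [← Finset.sum_fiberwise_of_maps_to (g := x) (t := T)
      (fun i hi => (Finset.mem_filter.mp hi).2) (fun i => extFun T s (x i))]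
    refine Finset.sum_congr rfl fun t ht => ?_
    have heq : ((Finset.univ.filter fun i => x i ∈ T).filter fun i => x i = t)
        = Finset.univ.filter fun i => x i = t := by
      ext i
      simp only [Finset.mem_filter, Finset.mem_univ, true_and]
      exact ⟨fun h => h.2, fun h => ⟨h ▸ ht, h⟩⟩
    rw [heq]
    rw [Finset.sum_congr rfl (fun i hi => by
      rw [(Finset.mem_filter.mp hi).2])]
    rw [Finset.sum_const, nsmul_eq_mul, mul_comm]
    rfl
  rw [h1, h2, Finset.sum_div,
    ← Finset.sum_attach T (fun t => extFun T s t * (cntAux t x : ℝ) / (hitCount T x : ℝ))]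
  refine Finset.sum_congr rfl fun t _ => ?_
  rw [extFun, dif_pos t.2, mul_div_assoc]

variable [Fintype Z]

lemma hitCount_swap (T : Finset Z) {t t' : Z} (ht : t ∈ T) (ht' : t' ∈ T)
    {m : ℕ} (x : Fin m → Z) :
    hitCount T ((Equiv.swap t t') ∘ x) = hitCount T x := by
  unfold hitCount
  congr 1
  ext i
  simp only [Finset.mem_filter, Finset.mem_univ, true_and, Function.comp_apply]
  rcases eq_or_ne (x i) t with h | h
  · simp [h, Equiv.swap_apply_left, ht, ht']
  rcases eq_or_ne (x i) t' with h2 | h2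
  · simp [h2, Equiv.swap_apply_right, ht, ht']
  · rw [Equiv.swap_apply_of_ne_of_ne h h2]

lemma cnt_swap {t t' : Z} {m : ℕ} (x : Fin m → Z) :
    cntAux t ((Equiv.swap t t') ∘ x) = cntAux t' x := by
  unfold cntAux
  congr 1
  ext i
  simp only [Finset.mem_filter, Finset.mem_univ, true_and, Function.comp_apply]
  rw [Equiv.apply_eq_iff_eq_symm_apply, Equiv.symm_swap, Equiv.swap_apply_left]

lemma W_const (T : Finset Z) {t t' : Z} (ht : t ∈ T) (ht' : t' ∈ T) {m : ℕ} :
    ∑ x ∈ Finset.univ.filter (fun x : Fin m → Z => 1 ≤ hitCount T x),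
        ((cntAux t x : ℝ) / (hitCount T x : ℝ))
    = ∑ x ∈ Finset.univ.filter (fun x : Fin m → Z => 1 ≤ hitCount T x),
        ((cntAux t' x : ℝ) / (hitCount T x : ℝ)) := by
  refine Finset.sum_nbij' (i := fun x => (Equiv.swap t t') ∘ x)
    (j := fun x => (Equiv.swap t t') ∘ x) ?_ ?_ ?_ ?_ ?_
  · intro x hx
    simp only [Finset.mem_filter, Finset.mem_univ, true_and] at hx ⊢
    rwa [hitCount_swap T ht ht']
  · intro x hx
    simp only [Finset.mem_filter, Finset.mem_univ, true_and] at hx ⊢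
    rwa [hitCount_swap T ht ht']
  · intro x _
    ext i
    simp [Equiv.swap_apply_self]
  · intro x _
    ext i
    simp [Equiv.swap_apply_self]
  · intro x hx
    show _ = (cntAux t' ((Equiv.swap t t') ∘ x) : ℝ) / (hitCount T ((Equiv.swap t t') ∘ x) : ℝ)
    rw [Equiv.swap_comm t t', cnt_swap, hitCount_swap T ht' ht]

end Aux

/-- **Conditional single-batch unbiasedness.** For a uniform `x ∈ Z^m`,
the conditional expectation of `A(x)` given the event `{N(x) ≥ 1}` equals
`s_T = (1/|T|) Σ_{t ∈ T} s t`. -/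
theorem conditional_single_batch_unbiasedness
    {Z : Type*} [Fintype Z] [DecidableEq Z] [Nonempty Z]
    (T : Finset Z) (hT : T.Nonempty) (s : T → ℝ) (m : ℕ) (hm : 1 ≤ m) :
    (∑ x ∈ Finset.univ.filter (fun x : Fin m → Z => 1 ≤ hitCount T x), batchAvg T s x)
        / ((Finset.univ.filter fun x : Fin m → Z => 1 ≤ hitCount T x).card : ℝ)
      = (∑ t ∈ T.attach, s t) / (T.card : ℝ) := by
  classical
  set S := Finset.univ.filter (fun x : Fin m → Z => 1 ≤ hitCount T x) with hSdef
  obtain ⟨t0, ht0⟩ := hT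
  have hmemS : (fun _ : Fin m => t0) ∈ S := by
    simp only [hSdef, Finset.mem_filter, Finset.mem_univ, true_and]
    simpa [hitCount, ht0, Finset.card_univ] using hm
  have hScard : 0 < S.card := Finset.card_pos.2 ⟨_, hmemS⟩
  have hTpos : 0 < T.card := Finset.card_pos.2 ⟨t0, ht0⟩
  have hSne : (S.card : ℝ) ≠ 0 := Nat.cast_ne_zero.2 hScard.ne'
  have hTne : (T.card : ℝ) ≠ 0 := Nat.cast_ne_zero.2 hTpos.ne'
  have h1 : ∑ x ∈ S, batchAvg T s x
      = ∑ t ∈ T.attach, s t * ∑ x ∈ S, ((cntAux t.1 x : ℝ) / (hitCount T x : ℝ)) := by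
    rw [Finset.sum_congr rfl (fun x hx => batchAvg_eq T s x
      (Nat.lt_of_lt_of_le Nat.zero_lt_one (Finset.mem_filter.mp hx).2))]
    rw [Finset.sum_comm]
    exact Finset.sum_congr rfl fun t _ => (Finset.mul_sum _ _ _).symm
  have hWsum : ∑ t ∈ T, ∑ x ∈ S, ((cntAux t x : ℝ) / (hitCount T x : ℝ)) = (S.card : ℝ) := by
    rw [Finset.sum_comm]
    rw [Finset.sum_congr rfl (fun x hx => ?_)]
    · rw [Finset.sum_const, nsmul_eq_mul, mul_one]
    · have hpos : 0 < hitCount T x :=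
        Nat.lt_of_lt_of_le Nat.zero_lt_one (Finset.mem_filter.mp hx).2
      rw [← Finset.sum_div, ← Nat.cast_sum, ← hitCount_eq_sum_cnt,
        div_self (Nat.cast_ne_zero.2 hpos.ne')]
  have hW : ∀ t ∈ T, ∑ x ∈ S, ((cntAux t x : ℝ) / (hitCount T x : ℝ))
      = (S.card : ℝ) / (T.card : ℝ) := by
    intro t ht
    have hconst : ∑ t' ∈ T, ∑ x ∈ S, ((cntAux t' x : ℝ) / (hitCount T x : ℝ))
        = (T.card : ℝ) * ∑ x ∈ S, ((cntAux t x : ℝ) / (hitCount T x : ℝ)) := by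
      rw [Finset.sum_congr rfl (fun t' ht' => W_const T ht' ht)]
      rw [Finset.sum_const, nsmul_eq_mul]
    rw [hWsum] at hconst
    field_simp
    linarith
  rw [h1, Finset.sum_congr rfl (fun t _ => by rw [hW t.1 t.2]), ← Finset.sum_mul]
  field_simp
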